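/- Let α ∈ (2,∞) and let F : (0,∞) → (0,∞) be continuous, strictly increasing with lim_{t→∞} F(t) = ∞, regularly varying of index 1/α, and satisfy lim_{t→∞} F(t)/√(log t) = ∞. Let U : ℝ² → (0,∞) be measurable, Lebesgue integrable, and have regular (F,α)-decay, and let ℓ > 0. Then for every ε ∈ (0,1): liminf_{|x|→∞} F(1/(|φ₀|² * U)(x))/|x| ≥ (1−ε)²/(1+ε)^{1/α} and limsup_{|x|→∞} F(1/(|φ₀|² * U)(x))/|x| ≤ (1+ε)²/(1−ε)^{1/α}. -/

import Mathlib

set_option maxHeartbeats 2000000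


open MeasureTheory Filter Real

noncomputable section

abbrev E2 := EuclideanSpace ℝ (Fin 2)

/-- The centred Gaussian probability density `|φ₀(x)|² = (2πℓ²)⁻¹ exp(-|x|²/(2ℓ²))` on `ℝ²`. -/
def phiSq (l : ℝ) (x : E2) : ℝ := (2 * π * l ^ 2)⁻¹ * Real.exp (-‖x‖ ^ 2 / (2 * l ^ 2))

/-- The Gaussian convolution `(|φ₀|² * U)(x) = ∫ |φ₀(y)|² U(x-y) dy`. -/
def gaussConv (l : ℝ) (U : E2 → ℝ) (x : E2) : ℝ := ∫ y : E2, phiSq l y * U (x - y)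

namespace Stmt10Aux

lemma ev_comap_iff {P : E2 → Prop} :
    (∀ᶠ x in comap (fun x : E2 => ‖x‖) atTop, P x) ↔ ∃ R : ℝ, ∀ x : E2, R ≤ ‖x‖ → P x := by
  rw [eventually_comap]
  constructor
  · intro h
    rw [eventually_atTop] at h
    obtain ⟨R, hR⟩ := h
    exact ⟨R, fun x hx => hR ‖x‖ hx x rfl⟩
  · rintro ⟨R, hR⟩
    filter_upwards [eventually_ge_atTop R] with r hr x hx
    exact hR x (hx ▸ hr)

lemma phiSq_pos {l : ℝ} (hl : 0 < l) (x : E2) : 0 < phiSq l x := by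
  have := Real.pi_pos
  unfold phiSq
  positivity

lemma phiSq_le {l : ℝ} (hl : 0 < l) (x : E2) {r : ℝ} (hr : 0 ≤ r) (hx : r ≤ ‖x‖) :
    phiSq l x ≤ (2 * π * l ^ 2)⁻¹ * Real.exp (-r ^ 2 / (2 * l ^ 2)) := by
  have hπ := Real.pi_pos
  unfold phiSq
  have h2 : (0:ℝ) < 2 * l ^ 2 := by positivity
  have hsq : r ^ 2 ≤ ‖x‖ ^ 2 := by nlinarith [norm_nonneg x]
  have h1 : -‖x‖ ^ 2 / (2 * l ^ 2) ≤ -r ^ 2 / (2 * l ^ 2) :=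
    (div_le_div_iff_of_pos_right h2).mpr (by linarith)
  have := Real.exp_le_exp.mpr h1
  have hc : (0:ℝ) ≤ (2 * π * l ^ 2)⁻¹ := by positivity
  exact mul_le_mul_of_nonneg_left this hc

lemma phiSq_le_const {l : ℝ} (hl : 0 < l) (x : E2) : phiSq l x ≤ (2 * π * l ^ 2)⁻¹ := by
  have h := phiSq_le hl x le_rfl (norm_nonneg x)
  calc phiSq l x ≤ (2 * π * l ^ 2)⁻¹ * Real.exp (-0 ^ 2 / (2 * l ^ 2)) := h
    _ = (2 * π * l ^ 2)⁻¹ := by norm_num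

lemma continuous_phiSq {l : ℝ} : Continuous (phiSq l) := by
  unfold phiSq
  continuity

lemma integral_phiSq {l : ℝ} (hl : 0 < l) : ∫ x : E2, phiSq l x = 1 := by
  have hb : 0 < (2 * l ^ 2)⁻¹ := by positivity
  have h := GaussianFourier.integral_rexp_neg_mul_sq_norm (V := E2) hb
  rw [finrank_euclideanSpace_fin] at h
  have hexp : (fun x : E2 => phiSq l x)
      = fun x : E2 => (2 * π * l ^ 2)⁻¹ * Real.exp (-(2 * l ^ 2)⁻¹ * ‖x‖ ^ 2) := by
    funext x
    unfold phiSq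
    ring_nf
  rw [hexp, MeasureTheory.integral_const_mul, h]
  have := Real.pi_pos
  rw [show ((2:ℕ):ℝ)/2 = (1:ℝ) by norm_num, Real.rpow_one]
  field_simp

lemma integrable_phiSq {l : ℝ} (hl : 0 < l) : Integrable (phiSq l) := by
  have hb : (0:ℝ) < (2 * l ^ 2)⁻¹ := by positivity
  have hb' : (0:ℝ) < (((2 * l ^ 2)⁻¹ : ℝ) : ℂ).re := by
    rw [Complex.ofReal_re]
    exact hb
  have hc := (GaussianFourier.integrable_cexp_neg_mul_sq_norm_add (V := E2) hb' 0 0).norm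
  have h : Integrable (fun v : E2 => Real.exp (-(2 * l ^ 2)⁻¹ * ‖v‖ ^ 2)) := by
    refine hc.congr (Eventually.of_forall fun v => ?_)
    show ‖Complex.exp _‖ = _
    rw [Complex.norm_exp]
    have heq : (-(((2 * l ^ 2)⁻¹ : ℝ) : ℂ) * ((‖v‖ : ℝ) : ℂ) ^ 2
        + 0 * (((inner ℝ (0 : E2) v : ℝ) : ℝ) : ℂ))
        = (((-(2 * l ^ 2)⁻¹ * ‖v‖ ^ 2 : ℝ)) : ℂ) := by push_cast; ring
    rw [heq, Complex.ofReal_re]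
  have : Integrable (fun v : E2 => (2 * π * l ^ 2)⁻¹ * Real.exp (-(2 * l ^ 2)⁻¹ * ‖v‖ ^ 2)) :=
    h.const_mul _
  refine this.congr (Eventually.of_forall fun v => ?_)
  unfold phiSq
  ring_nf

lemma integrable_convFn {l : ℝ} (hl : 0 < l) {U : E2 → ℝ} (hUmeas : Measurable U)
    (hUint : Integrable U) (x : E2) :
    Integrable (fun y : E2 => phiSq l y * U (x - y)) := by
  have h1 : Integrable (fun y : E2 => U (x - y)) := hUint.comp_sub_left x
  apply h1.bdd_mul (c := (2 * π * l ^ 2)⁻¹)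
  · exact (continuous_phiSq).aestronglyMeasurable
  · refine Eventually.of_forall fun y => ?_
    rw [Real.norm_eq_abs, abs_of_pos (phiSq_pos hl y)]
    exact phiSq_le_const hl y

lemma integral_pos_of_pos {f : E2 → ℝ} (hpos : ∀ x, 0 < f x) (hint : Integrable f) :
    0 < ∫ x, f x := by
  have hnn : 0 ≤ᵐ[(volume : Measure E2)] f := Eventually.of_forall fun y => (hpos y).le
  rw [MeasureTheory.integral_pos_iff_support_of_nonneg_ae hnn hint]
  have hsupp : Function.support f = Set.univ := by
    ext y
    simp only [Function.mem_support, Set.mem_univ, iff_true]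
    exact ne_of_gt (hpos y)
  rw [hsupp]
  exact isOpen_univ.measure_pos volume ⟨0, trivial⟩

lemma gaussConv_pos {l : ℝ} (hl : 0 < l) {U : E2 → ℝ} (hUpos : ∀ x, 0 < U x)
    (hUmeas : Measurable U) (hUint : Integrable U) (x : E2) :
    0 < gaussConv l U x :=
  integral_pos_of_pos (fun y => mul_pos (phiSq_pos hl y) (hUpos _))
    (integrable_convFn hl hUmeas hUint x)

end Stmt10Aux

open Stmt10Aux

/-- liminf/limsup bounds for `F(1/(|φ₀|²*U)(x))/|x|` as `|x| → ∞`, for every `ε ∈ (0,1)`. -/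
theorem stmt_10
    (α : ℝ) (hα : 2 < α)
    (F : ℝ → ℝ)
    (hFpos : ∀ t > 0, 0 < F t)
    (hFcont : ContinuousOn F (Set.Ioi 0))
    (hFmono : StrictMonoOn F (Set.Ioi 0))
    (hFtop : Tendsto F atTop atTop)
    (hFreg : ∀ c > 0, Tendsto (fun t : ℝ => F (c * t) / F t) atTop (nhds (c ^ (1 / α))))
    (hFsub : Tendsto (fun t : ℝ => F t / Real.sqrt (Real.log t)) atTop atTop)
    (U : E2 → ℝ)
    (hUpos : ∀ x, 0 < U x)
    (hUmeas : Measurable U)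
    (hUint : Integrable U)
    (hUdecay : Tendsto (fun x : E2 => F (1 / U x) / ‖x‖)
      (comap (fun x : E2 => ‖x‖) atTop) (nhds 1))
    (l : ℝ) (hl : 0 < l)
    (ε : ℝ) (hε : ε ∈ Set.Ioo (0 : ℝ) 1) :
    (1 - ε) ^ 2 / (1 + ε) ^ (1 / α) ≤
        Filter.liminf (fun x : E2 => F (1 / gaussConv l U x) / ‖x‖)
          (comap (fun x : E2 => ‖x‖) atTop) ∧
      Filter.limsup (fun x : E2 => F (1 / gaussConv l U x) / ‖x‖)
          (comap (fun x : E2 => ‖x‖) atTop) ≤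
        (1 + ε) ^ 2 / (1 - ε) ^ (1 / α) := by
  obtain ⟨hε0, hε1⟩ := hε
  have hα0 : (0:ℝ) < α := by linarith
  have h1α : (0:ℝ) < 1/α := by positivity
  haveI hLne : (comap (fun x : E2 => ‖x‖) atTop).NeBot := by
    rw [show (fun x : E2 => ‖x‖) = (norm : E2 → ℝ) from rfl, comap_norm_atTop]
    infer_instance
  have htcomap : Tendsto (fun x : E2 => ‖x‖) (comap (fun x : E2 => ‖x‖) atTop) atTop :=
    tendsto_comap
  set θ : ℝ := ε/3 with hθdef
  have hθ0 : 0 < θ := by positivity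
  have hθε : θ < ε := by rw [hθdef]; linarith
  have hθ1 : θ < 1 := by linarith
  have h1mθ : 0 < 1 - θ := by linarith
  have h1pθ : 0 < 1 + θ := by linarith
  have hπ := Real.pi_pos
  -- F basics
  have hF1 : 0 < F 1 := hFpos 1 one_pos
  have hFle : ∀ a b : ℝ, 0 < a → 0 < b → F a ≤ F b → a ≤ b := by
    intro a b ha hb h
    exact (hFmono.le_iff_le (Set.mem_Ioi.mpr ha) (Set.mem_Ioi.mpr hb)).mp h
  have hFmono' : ∀ a b : ℝ, 0 < a → a ≤ b → F a ≤ F b := by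
    intro a b ha hab
    exact (hFmono.le_iff_le (Set.mem_Ioi.mpr ha)
      (Set.mem_Ioi.mpr (lt_of_lt_of_le ha hab))).mpr hab
  -- inverse function G
  have hGex : ∀ m : ℝ, F 1 ≤ m → ∃ t : ℝ, 1 ≤ t ∧ F t = m := by
    intro m hm
    obtain ⟨T, hT1, hTm⟩ : ∃ T : ℝ, 1 ≤ T ∧ m ≤ F T := by
      obtain ⟨T, hT⟩ := ((hFtop.eventually_ge_atTop m).and (eventually_ge_atTop 1)).exists
      exact ⟨T, hT.2, hT.1⟩
    have hc : ContinuousOn F (Set.Icc 1 T) := by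
      apply hFcont.mono
      intro t ht
      exact lt_of_lt_of_le one_pos ht.1
    obtain ⟨t, ht, hFt⟩ := intermediate_value_Icc hT1 hc ⟨hm, hTm⟩
    exact ⟨t, ht.1, hFt⟩
  choose! G hG1 hGF using hGex
  have hGpos : ∀ m : ℝ, F 1 ≤ m → 0 < G m := fun m hm => lt_of_lt_of_le one_pos (hG1 m hm)
  have hGmono : ∀ m m' : ℝ, F 1 ≤ m → m ≤ m' → G m ≤ G m' := by
    intro m m' hm hmm'
    have hm' : F 1 ≤ m' := le_trans hm hmm'
    apply hFle _ _ (hGpos m hm) (hGpos m' hm')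
    rw [hGF m hm, hGF m' hm']
    exact hmm'
  have hGtop : Tendsto G atTop atTop := by
    rw [tendsto_atTop]
    intro b
    filter_upwards [eventually_ge_atTop (F 1), eventually_ge_atTop (F (max b 1) + 1)]
      with m h1 h2
    by_contra hcon
    push_neg at hcon
    have hGm : G m < max b 1 := lt_of_lt_of_le hcon (le_max_left _ _)
    have : F (G m) < F (max b 1) :=
      hFmono (Set.mem_Ioi.mpr (hGpos m h1))
        (Set.mem_Ioi.mpr (lt_of_lt_of_le one_pos (le_max_right _ _))) hGm
    rw [hGF m h1] at this
    linarith
  -- effective regular variation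
  have hRV : ∀ c : ℝ, 0 < c → ∀ η : ℝ, 0 < η → ∀ᶠ m in (atTop : Filter ℝ),
      F (c * G m) ≤ (c ^ (1/α) + η) * m ∧ (c ^ (1/α) - η) * m ≤ F (c * G m) := by
    intro c hc η hη
    have h1 : Tendsto (fun m : ℝ => F (c * G m) / F (G m)) atTop (nhds (c ^ (1/α))) :=
      (hFreg c hc).comp hGtop
    have h2 := Metric.tendsto_nhds.mp h1 η hη
    filter_upwards [h2, eventually_ge_atTop (max (F 1) 1)] with m hm hm1
    have hmF1 : F 1 ≤ m := le_trans (le_max_left _ _) hm1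
    have hm0 : (0:ℝ) < m := lt_of_lt_of_le one_pos (le_trans (le_max_right _ _) hm1)
    rw [Real.dist_eq, hGF m hmF1] at hm
    have habs := abs_lt.mp hm
    have hq : F (c * G m) = (F (c * G m) / m) * m := (div_mul_cancel₀ _ (ne_of_gt hm0)).symm
    constructor
    · rw [hq]
      have h3 : F (c * G m) / m ≤ c ^ (1/α) + η := by linarith [habs.2]
      nlinarith
    · rw [hq]
      have h3 : c ^ (1/α) - η ≤ F (c * G m) / m := by linarith [habs.1]
      nlinarith
  -- effective decay
  obtain ⟨R₁, hdec⟩ : ∃ R₁ : ℝ, ∀ z : E2, R₁ ≤ ‖z‖ →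
      (1-θ)*‖z‖ ≤ F (1/U z) ∧ F (1/U z) ≤ (1+θ)*‖z‖ := by
    apply ev_comap_iff.mp
    have h1 : ∀ᶠ x in comap (fun x : E2 => ‖x‖) atTop, dist (F (1/U x)/‖x‖) 1 < θ :=
      Metric.tendsto_nhds.mp hUdecay θ hθ0
    have h2 : ∀ᶠ x in comap (fun x : E2 => ‖x‖) atTop, (1:ℝ) ≤ ‖x‖ :=
      htcomap.eventually_ge_atTop 1
    filter_upwards [h1, h2] with x hx1 hx2
    have hx0 : (0:ℝ) < ‖x‖ := lt_of_lt_of_le one_pos hx2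
    rw [Real.dist_eq] at hx1
    have habs := abs_lt.mp hx1
    have hq : F (1/U x) = (F (1/U x)/‖x‖) * ‖x‖ := (div_mul_cancel₀ _ (ne_of_gt hx0)).symm
    constructor
    · rw [hq]; nlinarith [habs.1]
    · rw [hq]; nlinarith [habs.2]
  -- ball integrals of the Gaussian
  obtain ⟨n₀, hball⟩ : ∃ n₀ : ℕ, ∀ r : ℝ, (n₀:ℝ) ≤ r →
      1 - θ ≤ ∫ y in Metric.ball (0:E2) r, phiSq l y := by
    have hmono := MeasureTheory.tendsto_setIntegral_of_monotone
      (s := fun n : ℕ => Metric.ball (0:E2) n)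
      (fun n => measurableSet_ball)
      (fun a b hab => Metric.ball_subset_ball (by exact_mod_cast hab))
      ((integrable_phiSq hl).integrableOn)
    rw [Metric.iUnion_ball_nat 0, MeasureTheory.setIntegral_univ, integral_phiSq hl] at hmono
    obtain ⟨n₀, hn₀⟩ := (hmono.eventually (eventually_ge_nhds (show 1-θ < 1 by linarith))).exists
    refine ⟨n₀, fun r hr => le_trans hn₀ ?_⟩
    apply MeasureTheory.setIntegral_mono_set ((integrable_phiSq hl).integrableOn)
    · exact MeasureTheory.ae_restrict_of_ae (Eventually.of_forall fun y => (phiSq_pos hl y).le)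
    · exact (Metric.ball_subset_ball hr).eventuallyLE
  -- total mass of U and tail constants
  set IU : ℝ := ∫ z : E2, U z with hIUdef
  have hIU : 0 < IU := integral_pos_of_pos hUpos hUint
  set C : ℝ := (2 * π * l ^ 2)⁻¹ * IU with hCdef
  have hC0 : 0 < C := by
    apply mul_pos _ hIU
    positivity
  -- tail estimate
  have htail : ∀ᶠ R in (atTop : Filter ℝ),
      C * Real.exp (-(θ*R)^2/(2*l^2)) ≤ θ * (G ((1-θ)^2*R))⁻¹ := by
    set K : ℝ := (2*l)/θ with hKdef
    have hsfun : Tendsto (fun R : ℝ => θ * C⁻¹ * Real.exp ((θ*R)^2/(2*l^2))) atTop atTop := by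
      apply Tendsto.const_mul_atTop (by positivity)
      apply Real.tendsto_exp_atTop.comp
      apply Tendsto.atTop_div_const (by positivity)
      have h1 : Tendsto (fun R : ℝ => θ * R) atTop atTop :=
        Tendsto.const_mul_atTop hθ0 tendsto_id
      have := h1.atTop_mul_atTop₀ h1
      simpa [pow_two] using this
    have hKev := hsfun.eventually (hFsub.eventually_ge_atTop K)
    filter_upwards [hKev,
      eventually_ge_atTop (1:ℝ),
      eventually_ge_atTop ((4*l^2/θ^2) * (1 + |Real.log (θ * C⁻¹)|)),
      eventually_ge_atTop (F 1 / (1-θ)^2)] with R hR1 hRge1 hRbig hRF1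
    set s : ℝ := θ * C⁻¹ * Real.exp ((θ*R)^2/(2*l^2)) with hsdef
    have hs0 : 0 < s := by positivity
    have hmF1 : F 1 ≤ (1-θ)^2*R := by
      rw [div_le_iff₀ (by positivity)] at hRF1
      linarith [hRF1]
    have hlogs : Real.log s = Real.log (θ*C⁻¹) + (θ*R)^2/(2*l^2) := by
      rw [hsdef, Real.log_mul (by positivity) (Real.exp_ne_zero _), Real.log_exp]
    have hkey : (θ*R/(2*l))^2 ≤ Real.log s := by
      rw [hlogs]
      have h4 : 1 + |Real.log (θ*C⁻¹)| ≤ θ^2*R/(4*l^2) := by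
        have hpos : (0:ℝ) ≤ θ^2/(4*l^2) := by positivity
        have hh := mul_le_mul_of_nonneg_left hRbig hpos
        have he : θ^2/(4*l^2) * (4*l^2/θ^2 * (1 + |Real.log (θ*C⁻¹)|))
            = 1 + |Real.log (θ*C⁻¹)| := by field_simp
        rw [he] at hh
        calc 1 + |Real.log (θ*C⁻¹)| ≤ θ^2/(4*l^2)*R := hh
          _ = θ^2*R/(4*l^2) := by ring
      have h6 : -Real.log (θ*C⁻¹) ≤ |Real.log (θ*C⁻¹)| := neg_le_abs _
      have h7 : θ^2*R/(4*l^2) ≤ θ^2*R^2/(4*l^2) := by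
        gcongr
        nlinarith
      have heq : (θ*R/(2*l))^2 = θ^2*R^2/(4*l^2) := by ring
      have heq2 : (θ*R)^2/(2*l^2) = 2*(θ^2*R^2/(4*l^2)) := by ring
      rw [heq, heq2]
      linarith
    have hsq : θ*R/(2*l) ≤ Real.sqrt (Real.log s) :=
      Real.le_sqrt_of_sq_le hkey
    have hsqrtpos : 0 < Real.sqrt (Real.log s) :=
      lt_of_lt_of_le (by positivity) hsq
    have hFs : R ≤ F s := by
      have hKs : K * Real.sqrt (Real.log s) ≤ F s := by
        rw [le_div_iff₀ hsqrtpos] at hR1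
        linarith [hR1]
      have hKθ : K * (θ*R/(2*l)) = R := by
        rw [hKdef]; field_simp
      calc R = K * (θ*R/(2*l)) := hKθ.symm
        _ ≤ K * Real.sqrt (Real.log s) := by
            apply mul_le_mul_of_nonneg_left hsq (by positivity)
        _ ≤ F s := hKs
    have hGs : G ((1-θ)^2*R) ≤ s := by
      apply hFle _ _ (hGpos _ hmF1) hs0
      rw [hGF _ hmF1]
      have hmR : (1-θ)^2*R ≤ R := by
        nlinarith [mul_nonneg (mul_nonneg hθ0.le (show (0:ℝ) ≤ 2-θ by linarith))
          (show (0:ℝ) ≤ R by linarith)]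
      linarith
    have hGminv : s⁻¹ ≤ (G ((1-θ)^2*R))⁻¹ :=
      inv_anti₀ (hGpos _ hmF1) hGs
    have hsinv : θ * s⁻¹ = C * Real.exp (-(θ*R)^2/(2*l^2)) := by
      rw [show -(θ*R)^2/(2*l^2) = -((θ*R)^2/(2*l^2)) by ring, Real.exp_neg, hsdef]
      field_simp
    calc C * Real.exp (-(θ*R)^2/(2*l^2)) = θ * s⁻¹ := hsinv.symm
      _ ≤ θ * (G ((1-θ)^2*R))⁻¹ := mul_le_mul_of_nonneg_left hGminv hθ0.le
  -- rpow constants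
  set B : ℝ := ((1-ε) ^ (1/α))⁻¹ with hBdef
  have hrpowB : (0:ℝ) < (1-ε) ^ (1/α) := Real.rpow_pos_of_pos (by linarith) _
  have hBpos : 0 < B := by rw [hBdef]; positivity
  have hB1 : 1 ≤ B := by
    rw [hBdef]
    rw [le_inv_comm₀ one_pos hrpowB]
    simpa using Real.rpow_le_one (by linarith) (by linarith) h1α.le
  have hcB : ((1-θ)⁻¹) ^ (1/α) ≤ B := by
    rw [hBdef, ← Real.inv_rpow (by linarith : (0:ℝ) ≤ 1-ε)]
    apply Real.rpow_le_rpow (by positivity) _ h1α.le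
    exact inv_anti₀ (by linarith) (by linarith)
  set B' : ℝ := ((1+ε) ^ (1/α))⁻¹ with hB'def
  have hrpowB' : (0:ℝ) < (1+ε) ^ (1/α) := Real.rpow_pos_of_pos (by linarith) _
  have hB'pos : 0 < B' := by rw [hB'def]; positivity
  have hB'le : B' ≤ ((1+θ)⁻¹) ^ (1/α) := by
    rw [hB'def, ← Real.inv_rpow (by linarith : (0:ℝ) ≤ 1+ε)]
    apply Real.rpow_le_rpow (by positivity) _ h1α.le
    exact inv_anti₀ (by linarith) (by linarith)
  -- numeric bounds
  have hnum_up : (((1-θ)⁻¹) ^ (1/α) + θ*B) * (1+θ)^2 ≤ (1+ε)^2 * B := by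
    have hε2 : ε^2 ≤ ε := by nlinarith [mul_pos hε0 (show (0:ℝ) < 1-ε by linarith)]
    have hε3 : ε^3 ≤ ε := by
      nlinarith [mul_pos (mul_pos hε0 (show (0:ℝ) < 1-ε by linarith))
        (show (0:ℝ) < 1+ε by linarith)]
    have h3 : (1+θ)^3 ≤ (1+ε)^2 := by rw [hθdef]; nlinarith [hε3, sq_nonneg ε]
    calc (((1-θ)⁻¹) ^ (1/α) + θ*B) * (1+θ)^2 ≤ (B + θ*B) * (1+θ)^2 := by
          nlinarith [hcB, sq_nonneg (1+θ)]
      _ = B * (1+θ)^3 := by ring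
      _ ≤ B * (1+ε)^2 := by nlinarith [h3, hBpos.le]
      _ = (1+ε)^2 * B := by ring
  have hnum_lo : (1-ε)^2 * B' ≤ (((1+θ)⁻¹) ^ (1/α) - θ*B') * (1-θ)^2 := by
    have hε2 : ε^2 ≤ ε := by nlinarith [mul_pos hε0 (show (0:ℝ) < 1-ε by linarith)]
    have hε3 : ε^3 ≤ ε := by
      nlinarith [mul_pos (mul_pos hε0 (show (0:ℝ) < 1-ε by linarith))
        (show (0:ℝ) < 1+ε by linarith)]
    have h3 : (1-ε)^2 ≤ (1-θ)^3 := by rw [hθdef]; nlinarith [hε2, hε3, sq_nonneg ε]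
    calc (1-ε)^2 * B' ≤ (1-θ)^3 * B' := by nlinarith [h3, hB'pos.le]
      _ = (B' - θ*B') * (1-θ)^2 := by ring
      _ ≤ (((1+θ)⁻¹) ^ (1/α) - θ*B') * (1-θ)^2 := by
          nlinarith [hB'le, sq_nonneg (1-θ)]
  -- the eventual upper bound
  have hup : ∀ᶠ x in comap (fun x : E2 => ‖x‖) atTop,
      F (1 / gaussConv l U x) / ‖x‖ ≤ (1+ε)^2/(1-ε)^(1/α) := by
    have hMt : Tendsto (fun R : ℝ => (1+θ)^2*R) atTop atTop :=
      Tendsto.const_mul_atTop (by positivity) tendsto_id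
    have hrvR : ∀ᶠ R in (atTop : Filter ℝ),
        F ((1-θ)⁻¹ * G ((1+θ)^2*R)) ≤ (((1-θ)⁻¹) ^ (1/α) + θ*B) * ((1+θ)^2*R) :=
      (hMt.eventually (hRV ((1-θ)⁻¹) (by positivity) (θ*B) (by positivity))).mono
        (fun R h => h.1)
    have hcond : ∀ᶠ R in (atTop : Filter ℝ),
        (n₀:ℝ) ≤ θ*R ∧ R₁ ≤ (1-θ)*R ∧ F 1 ≤ (1+θ)*((1-θ)*R) ∧ 1 ≤ R := by
      have t1 : Tendsto (fun R:ℝ => θ*R) atTop atTop :=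
        Tendsto.const_mul_atTop hθ0 tendsto_id
      have t2 : Tendsto (fun R:ℝ => (1-θ)*R) atTop atTop :=
        Tendsto.const_mul_atTop h1mθ tendsto_id
      have t3 : Tendsto (fun R:ℝ => (1+θ)*((1-θ)*R)) atTop atTop :=
        Tendsto.const_mul_atTop h1pθ t2
      filter_upwards [t1.eventually_ge_atTop (n₀:ℝ), t2.eventually_ge_atTop R₁,
        t3.eventually_ge_atTop (F 1), eventually_ge_atTop 1] with R h1 h2 h3 h4
      exact ⟨h1, h2, h3, h4⟩
    filter_upwards [htcomap.eventually hrvR, htcomap.eventually hcond] with x hrv' hcond'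
    obtain ⟨hn₀R, hR₁R, hF1R, h1R⟩ := hcond'
    have hR0 : (0:ℝ) < ‖x‖ := lt_of_lt_of_le one_pos h1R
    have hMF1 : F 1 ≤ (1+θ)^2*‖x‖ := by
      refine le_trans hF1R ?_
      nlinarith [mul_pos hθ0 hR0, mul_pos (mul_pos hθ0 hθ0) hR0]
    have hGM : 0 < G ((1+θ)^2*‖x‖) := hGpos _ hMF1
    have key : ∀ y ∈ Metric.ball (0:E2) (θ*‖x‖), (G ((1+θ)^2*‖x‖))⁻¹ ≤ U (x - y) := by
      intro y hy
      rw [Metric.mem_ball, dist_zero_right] at hy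
      have hz1 : (1-θ)*‖x‖ ≤ ‖x - y‖ := by
        have h := norm_sub_norm_le x y
        have he : (1-θ)*‖x‖ = ‖x‖ - θ*‖x‖ := by ring
        linarith [hy.le]
      have hz2 : ‖x - y‖ ≤ (1+θ)*‖x‖ := by
        have h := norm_sub_le x y
        have he : (1+θ)*‖x‖ = ‖x‖ + θ*‖x‖ := by ring
        linarith [hy.le]
      have hdec2 := (hdec (x-y) (le_trans hR₁R hz1)).2
      have hm'F1 : F 1 ≤ (1+θ)*‖x-y‖ :=
        le_trans hF1R (mul_le_mul_of_nonneg_left hz1 h1pθ.le)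
      have h1U : 1/U (x-y) ≤ G ((1+θ)*‖x-y‖) := by
        apply hFle _ _ (one_div_pos.mpr (hUpos _)) (hGpos _ hm'F1)
        rw [hGF _ hm'F1]
        exact hdec2
      have hGle : G ((1+θ)*‖x-y‖) ≤ G ((1+θ)^2*‖x‖) := by
        apply hGmono _ _ hm'F1
        have h8 := mul_le_mul_of_nonneg_left hz2 h1pθ.le
        have h9 : (1+θ)*((1+θ)*‖x‖) = (1+θ)^2*‖x‖ := by ring
        linarith
      have hUinv : (U (x-y))⁻¹ ≤ G ((1+θ)^2*‖x‖) := by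
        rw [← one_div]
        exact le_trans h1U hGle
      calc (G ((1+θ)^2*‖x‖))⁻¹ ≤ ((U (x-y))⁻¹)⁻¹ :=
            inv_anti₀ (inv_pos.mpr (hUpos _)) hUinv
        _ = U (x-y) := inv_inv _
    have hint := integrable_convFn hl hUmeas hUint x
    have hlow : (1-θ) * (G ((1+θ)^2*‖x‖))⁻¹ ≤ gaussConv l U x := by
      have h1 : ∫ y in Metric.ball (0:E2) (θ*‖x‖), phiSq l y * (G ((1+θ)^2*‖x‖))⁻¹
          ≤ ∫ y in Metric.ball (0:E2) (θ*‖x‖), phiSq l y * U (x - y) := by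
        apply MeasureTheory.setIntegral_mono_on
          (((integrable_phiSq hl).mul_const _).integrableOn)
          hint.integrableOn measurableSet_ball
        intro y hy
        exact mul_le_mul_of_nonneg_left (key y hy) (phiSq_pos hl y).le
      have h2 : ∫ y in Metric.ball (0:E2) (θ*‖x‖), phiSq l y * (G ((1+θ)^2*‖x‖))⁻¹
          = (∫ y in Metric.ball (0:E2) (θ*‖x‖), phiSq l y) * (G ((1+θ)^2*‖x‖))⁻¹ :=
        MeasureTheory.integral_mul_const _ _
      have h3 : (1-θ) * (G ((1+θ)^2*‖x‖))⁻¹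
          ≤ (∫ y in Metric.ball (0:E2) (θ*‖x‖), phiSq l y) * (G ((1+θ)^2*‖x‖))⁻¹ :=
        mul_le_mul_of_nonneg_right (hball _ hn₀R) (inv_pos.mpr hGM).le
      have h4 : ∫ y in Metric.ball (0:E2) (θ*‖x‖), phiSq l y * U (x - y) ≤ gaussConv l U x := by
        rw [gaussConv]
        apply MeasureTheory.setIntegral_le_integral hint
        exact Eventually.of_forall fun y => (mul_pos (phiSq_pos hl y) (hUpos _)).le
      linarith
    have hconv := gaussConv_pos hl hUpos hUmeas hUint x
    have hinv : 1 / gaussConv l U x ≤ (1-θ)⁻¹ * G ((1+θ)^2*‖x‖) := by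
      have h0 : 0 < (1-θ) * (G ((1+θ)^2*‖x‖))⁻¹ := by positivity
      calc 1/gaussConv l U x ≤ 1/((1-θ)*(G ((1+θ)^2*‖x‖))⁻¹) :=
            one_div_le_one_div_of_le h0 hlow
        _ = (1-θ)⁻¹ * G ((1+θ)^2*‖x‖) := by rw [one_div, mul_inv, inv_inv]
    have hF : F (1/gaussConv l U x) ≤ (((1-θ)⁻¹) ^ (1/α) + θ*B) * ((1+θ)^2*‖x‖) :=
      le_trans (hFmono' _ _ (one_div_pos.mpr hconv) hinv) hrv'
    rw [div_le_iff₀ hR0, show (1+ε)^2/(1-ε)^(1/α) = (1+ε)^2 * B by rw [hBdef, div_eq_mul_inv]]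
    calc F (1/gaussConv l U x) ≤ (((1-θ)⁻¹) ^ (1/α) + θ*B) * ((1+θ)^2*‖x‖) := hF
      _ = ((((1-θ)⁻¹) ^ (1/α) + θ*B) * (1+θ)^2) * ‖x‖ := by ring
      _ ≤ ((1+ε)^2 * B) * ‖x‖ := mul_le_mul_of_nonneg_right hnum_up hR0.le
  -- the eventual lower bound
  have hlo : ∀ᶠ x in comap (fun x : E2 => ‖x‖) atTop,
      (1-ε)^2/(1+ε)^(1/α) ≤ F (1 / gaussConv l U x) / ‖x‖ := by
    have hmt : Tendsto (fun R : ℝ => (1-θ)^2*R) atTop atTop :=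
      Tendsto.const_mul_atTop (by positivity) tendsto_id
    have hrvR : ∀ᶠ R in (atTop : Filter ℝ),
        (((1+θ)⁻¹) ^ (1/α) - θ*B') * ((1-θ)^2*R) ≤ F ((1+θ)⁻¹ * G ((1-θ)^2*R)) :=
      (hmt.eventually (hRV ((1+θ)⁻¹) (by positivity) (θ*B') (by positivity))).mono
        (fun R h => h.2)
    have hcond : ∀ᶠ R in (atTop : Filter ℝ),
        R₁ ≤ (1-θ)*R ∧ F 1 ≤ (1-θ)^2*R ∧ 1 ≤ R := by
      have t2 : Tendsto (fun R:ℝ => (1-θ)*R) atTop atTop :=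
        Tendsto.const_mul_atTop h1mθ tendsto_id
      filter_upwards [t2.eventually_ge_atTop R₁, hmt.eventually_ge_atTop (F 1),
        eventually_ge_atTop 1] with R h1 h2 h3
      exact ⟨h1, h2, h3⟩
    filter_upwards [htcomap.eventually hrvR, htcomap.eventually hcond,
      htcomap.eventually htail] with x hrv' hcond' htail'
    obtain ⟨hR₁R, hmF1, h1R⟩ := hcond'
    have hR0 : (0:ℝ) < ‖x‖ := lt_of_lt_of_le one_pos h1R
    have hGm : 0 < G ((1-θ)^2*‖x‖) := hGpos _ hmF1
    have hint := integrable_convFn hl hUmeas hUint x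
    -- near bound
    have hnear : ∫ y in Metric.ball (0:E2) (θ*‖x‖), phiSq l y * U (x - y)
        ≤ (G ((1-θ)^2*‖x‖))⁻¹ := by
      have key : ∀ y ∈ Metric.ball (0:E2) (θ*‖x‖), U (x - y) ≤ (G ((1-θ)^2*‖x‖))⁻¹ := by
        intro y hy
        rw [Metric.mem_ball, dist_zero_right] at hy
        have hz1 : (1-θ)*‖x‖ ≤ ‖x - y‖ := by
          have h := norm_sub_norm_le x y
          have he : (1-θ)*‖x‖ = ‖x‖ - θ*‖x‖ := by ring
          linarith [hy.le]
        have hdec1 := (hdec (x-y) (le_trans hR₁R hz1)).1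
        have hGle : G ((1-θ)^2*‖x‖) ≤ 1/U (x-y) := by
          apply hFle _ _ (hGpos _ hmF1) (one_div_pos.mpr (hUpos _))
          rw [hGF _ hmF1]
          have h8 := mul_le_mul_of_nonneg_left hz1 h1mθ.le
          have h9 : (1-θ)*((1-θ)*‖x‖) = (1-θ)^2*‖x‖ := by ring
          have : (1-θ)^2*‖x‖ ≤ (1-θ)*‖x-y‖ := by linarith
          linarith
        rw [one_div] at hGle
        calc U (x-y) = ((U (x-y))⁻¹)⁻¹ := (inv_inv _).symm
          _ ≤ (G ((1-θ)^2*‖x‖))⁻¹ := inv_anti₀ hGm hGle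
      have h1 : ∫ y in Metric.ball (0:E2) (θ*‖x‖), phiSq l y * U (x - y)
          ≤ ∫ y in Metric.ball (0:E2) (θ*‖x‖), phiSq l y * (G ((1-θ)^2*‖x‖))⁻¹ := by
        apply MeasureTheory.setIntegral_mono_on hint.integrableOn
          (((integrable_phiSq hl).mul_const _).integrableOn) measurableSet_ball
        intro y hy
        exact mul_le_mul_of_nonneg_left (key y hy) (phiSq_pos hl y).le
      have h2 : ∫ y in Metric.ball (0:E2) (θ*‖x‖), phiSq l y * (G ((1-θ)^2*‖x‖))⁻¹
          = (∫ y in Metric.ball (0:E2) (θ*‖x‖), phiSq l y) * (G ((1-θ)^2*‖x‖))⁻¹ :=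
        MeasureTheory.integral_mul_const _ _
      have h3 : ∫ y in Metric.ball (0:E2) (θ*‖x‖), phiSq l y ≤ 1 := by
        rw [← integral_phiSq hl]
        apply MeasureTheory.setIntegral_le_integral (integrable_phiSq hl)
        exact Eventually.of_forall fun y => (phiSq_pos hl y).le
      have h4 : (∫ y in Metric.ball (0:E2) (θ*‖x‖), phiSq l y) * (G ((1-θ)^2*‖x‖))⁻¹
          ≤ 1 * (G ((1-θ)^2*‖x‖))⁻¹ :=
        mul_le_mul_of_nonneg_right h3 (inv_pos.mpr hGm).le
      calc ∫ y in Metric.ball (0:E2) (θ*‖x‖), phiSq l y * U (x - y)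
          ≤ (∫ y in Metric.ball (0:E2) (θ*‖x‖), phiSq l y) * (G ((1-θ)^2*‖x‖))⁻¹ := by
            rw [← h2]; exact h1
        _ ≤ 1 * (G ((1-θ)^2*‖x‖))⁻¹ := h4
        _ = (G ((1-θ)^2*‖x‖))⁻¹ := one_mul _
    -- far bound
    have hfar : ∫ y in (Metric.ball (0:E2) (θ*‖x‖))ᶜ, phiSq l y * U (x - y)
        ≤ C * Real.exp (-(θ*‖x‖)^2/(2*l^2)) := by
      have hbd : ∀ y ∈ (Metric.ball (0:E2) (θ*‖x‖))ᶜ,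
          phiSq l y * U (x - y)
            ≤ ((2 * π * l ^ 2)⁻¹ * Real.exp (-(θ*‖x‖)^2/(2*l^2))) * U (x - y) := by
        intro y hy
        rw [Set.mem_compl_iff, Metric.mem_ball, dist_zero_right, not_lt] at hy
        exact mul_le_mul_of_nonneg_right (phiSq_le hl y (by positivity) hy) (hUpos _).le
      have h1 : ∫ y in (Metric.ball (0:E2) (θ*‖x‖))ᶜ, phiSq l y * U (x - y)
          ≤ ∫ y in (Metric.ball (0:E2) (θ*‖x‖))ᶜ,
              ((2 * π * l ^ 2)⁻¹ * Real.exp (-(θ*‖x‖)^2/(2*l^2))) * U (x - y) := by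
        apply MeasureTheory.setIntegral_mono_on hint.integrableOn
          (((hUint.comp_sub_left x).const_mul _).integrableOn) measurableSet_ball.compl hbd
      have h2 : ∫ y in (Metric.ball (0:E2) (θ*‖x‖))ᶜ,
            ((2 * π * l ^ 2)⁻¹ * Real.exp (-(θ*‖x‖)^2/(2*l^2))) * U (x - y)
          ≤ ∫ y : E2, ((2 * π * l ^ 2)⁻¹ * Real.exp (-(θ*‖x‖)^2/(2*l^2))) * U (x - y) := by
        apply MeasureTheory.setIntegral_le_integral ((hUint.comp_sub_left x).const_mul _)
        apply Eventually.of_forall fun y => ?_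
        have : 0 < (2 * π * l ^ 2)⁻¹ * Real.exp (-(θ*‖x‖)^2/(2*l^2)) := by positivity
        exact (mul_pos this (hUpos _)).le
      have h3 : ∫ y : E2, ((2 * π * l ^ 2)⁻¹ * Real.exp (-(θ*‖x‖)^2/(2*l^2))) * U (x - y)
          = ((2 * π * l ^ 2)⁻¹ * Real.exp (-(θ*‖x‖)^2/(2*l^2))) * IU := by
        rw [MeasureTheory.integral_const_mul, hIUdef,
          MeasureTheory.integral_sub_left_eq_self U volume x]
      have h4 : ((2 * π * l ^ 2)⁻¹ * Real.exp (-(θ*‖x‖)^2/(2*l^2))) * IU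
          = C * Real.exp (-(θ*‖x‖)^2/(2*l^2)) := by
        rw [hCdef]; ring
      linarith
    -- combine
    have hsplit : gaussConv l U x
        = (∫ y in Metric.ball (0:E2) (θ*‖x‖), phiSq l y * U (x - y))
          + ∫ y in (Metric.ball (0:E2) (θ*‖x‖))ᶜ, phiSq l y * U (x - y) := by
      rw [gaussConv, ← MeasureTheory.integral_add_compl measurableSet_ball hint]
    have hconvle : gaussConv l U x ≤ (1+θ) * (G ((1-θ)^2*‖x‖))⁻¹ := by
      rw [hsplit]
      have := le_trans hfar htail'
      linarith
    have hconv := gaussConv_pos hl hUpos hUmeas hUint x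
    have hinv : (1+θ)⁻¹ * G ((1-θ)^2*‖x‖) ≤ 1 / gaussConv l U x := by
      calc (1+θ)⁻¹ * G ((1-θ)^2*‖x‖) = 1/((1+θ)*(G ((1-θ)^2*‖x‖))⁻¹) := by
            rw [one_div, mul_inv, inv_inv]
        _ ≤ 1/gaussConv l U x := one_div_le_one_div_of_le hconv hconvle
    have hF : (((1+θ)⁻¹) ^ (1/α) - θ*B') * ((1-θ)^2*‖x‖) ≤ F (1/gaussConv l U x) := by
      apply le_trans hrv'
      apply hFmono' _ _ _ hinv
      positivity
    rw [le_div_iff₀ hR0, show (1-ε)^2/(1+ε)^(1/α) = (1-ε)^2 * B' by rw [hB'def, div_eq_mul_inv]]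
    calc (1-ε)^2 * B' * ‖x‖ ≤ ((((1+θ)⁻¹) ^ (1/α) - θ*B') * (1-θ)^2) * ‖x‖ :=
          mul_le_mul_of_nonneg_right hnum_lo hR0.le
      _ = (((1+θ)⁻¹) ^ (1/α) - θ*B') * ((1-θ)^2*‖x‖) := by ring
      _ ≤ F (1/gaussConv l U x) := hF
  exact ⟨le_liminf_of_le (isCoboundedUnder_ge_of_eventually_le _ hup) hlo,
    limsup_le_of_le (isCoboundedUnder_le_of_eventually_le _ hlo) hup⟩
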